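/- For every real s, B_n^e(s) = P_n G_n(-s) P_n G_n(-1), where P_n is the lower triangular Pascal matrix and G_n(t) = diag(1, t, ..., t^{n-1}). -/

import Mathlib

lemma key_sum (i j : ℕ) (hji : j ≤ i) (x : ℝ) :
    ∑ k ∈ Finset.range (i + 1),
      (if k ≤ i then ((i.choose k : ℝ)) else 0) * x ^ k *
        (if j ≤ k then ((k.choose j : ℝ)) else 0)
    = (i.choose j : ℝ) * x ^ j * (1 + x) ^ (i - j) := by
  have h1 : ∀ k ∈ Finset.range (i + 1),
      (if k ≤ i then ((i.choose k : ℝ)) else 0) * x ^ k *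
        (if j ≤ k then ((k.choose j : ℝ)) else 0)
      = if j ≤ k then ((i.choose k : ℝ)) * ((k.choose j : ℝ)) * x ^ k else 0 := by
    intro k hk
    rw [Finset.mem_range] at hk
    rw [if_pos (Nat.lt_succ_iff.mp hk)]
    by_cases h : j ≤ k <;> simp [h] <;> ring
  rw [Finset.sum_congr rfl h1, ← Finset.sum_filter]
  have hf : (Finset.range (i + 1)).filter (fun k => j ≤ k) = Finset.Ico j (i + 1) := by
    ext k; simp [Nat.lt_succ_iff, and_comm]
  rw [hf, Finset.sum_Ico_eq_sum_range]
  have h2 : ∀ m ∈ Finset.range (i + 1 - j),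
      ((i.choose (j + m) : ℝ)) * (((j + m).choose j : ℝ)) * x ^ (j + m)
      = (i.choose j : ℝ) * (((i - j).choose m : ℝ)) * (x ^ j * x ^ m) := by
    intro m hm
    rw [Finset.mem_range] at hm
    have hkn : j + m ≤ i := by omega
    have := Nat.choose_mul (n := i) (Nat.le_add_right j m)
    rw [Nat.add_sub_cancel_left] at this
    rw [← pow_add, ← Nat.cast_mul, ← Nat.cast_mul, this]
  rw [Finset.sum_congr rfl h2]
  have h3 : i + 1 - j = (i - j) + 1 := by omega
  rw [h3, add_comm (1:ℝ) x, add_pow, Finset.mul_sum]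
  refine Finset.sum_congr rfl fun m hm => ?_
  simp; ring

theorem bernstein_pascal_factorization (n : ℕ) (s : ℝ)
    (B : Matrix (Fin n) (Fin n) ℝ)
    (hB : ∀ i j : Fin n, B i j =
      if (j : ℕ) ≤ (i : ℕ) then
        ((i : ℕ).choose j : ℝ) * s ^ (j : ℕ) * (1 - s) ^ ((i : ℕ) - (j : ℕ))
      else 0)
    (P : Matrix (Fin n) (Fin n) ℝ)
    (hP : ∀ i j : Fin n, P i j = if (j : ℕ) ≤ (i : ℕ) then ((i : ℕ).choose j : ℝ) else 0)
    (G : ℝ → Matrix (Fin n) (Fin n) ℝ)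
    (hG : ∀ u, G u = Matrix.diagonal (fun i : Fin n => u ^ (i : ℕ))) :
    B = P * G (-s) * P * G (-1) := by
  ext i j
  have hR : (P * G (-s) * P * G (-1)) i j
      = (∑ k : Fin n, (P i k * (-s) ^ (k : ℕ)) * P k j) * (-1) ^ (j : ℕ) := by
    rw [hG, hG, Matrix.mul_diagonal, Matrix.mul_apply]
    congr 1
    refine Finset.sum_congr rfl fun k _ => ?_
    rw [Matrix.mul_diagonal]
  rw [hR, hB]
  simp only [hP]
  have hfin : (∑ k : Fin n, ((if (k : ℕ) ≤ (i : ℕ) then ((i : ℕ).choose k : ℝ) else 0)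
        * (-s) ^ (k : ℕ)) * (if (j : ℕ) ≤ (k : ℕ) then (((k : ℕ)).choose j : ℝ) else 0))
      = ∑ k ∈ Finset.range n, ((if k ≤ (i : ℕ) then ((i : ℕ).choose k : ℝ) else 0)
        * (-s) ^ k) * (if (j : ℕ) ≤ k then ((k.choose j : ℝ)) else 0) :=
    Fin.sum_univ_eq_sum_range (fun k => ((if k ≤ (i : ℕ) then ((i : ℕ).choose k : ℝ) else 0)
        * (-s) ^ k) * (if (j : ℕ) ≤ k then ((k.choose j : ℝ)) else 0)) n
  rw [hfin]
  by_cases hji : (j : ℕ) ≤ (i : ℕ)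
  · rw [if_pos hji]
    have hsub : Finset.range ((i : ℕ) + 1) ⊆ Finset.range n := by
      apply Finset.range_subset_range.mpr; omega
    rw [← Finset.sum_subset hsub (by
      intro k _ hk
      rw [Finset.mem_range, Nat.lt_succ_iff] at hk
      rw [if_neg hk]; ring)]
    have := key_sum (i : ℕ) (j : ℕ) hji (-s)
    simp only [mul_assoc] at this ⊢
    rw [this]
    rw [mul_assoc]
    have hpow : ((-s) ^ (j : ℕ) * (1 + -s) ^ ((i : ℕ) - (j : ℕ))) * (-1 : ℝ) ^ (j : ℕ)
        = s ^ (j : ℕ) * (1 - s) ^ ((i : ℕ) - (j : ℕ)) := by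
      have hm : ((-s) : ℝ) ^ (j : ℕ) * (-1 : ℝ) ^ (j : ℕ) = s ^ (j : ℕ) := by
        rw [← mul_pow]; norm_num
      have h1s : (1 : ℝ) + -s = 1 - s := by ring
      rw [mul_right_comm, hm, h1s]
    rw [hpow]
  · rw [if_neg hji]
    rw [Finset.sum_eq_zero, zero_mul]
    intro k _
    by_cases h1 : k ≤ (i : ℕ)
    · rw [if_pos h1, if_neg (by omega)]; ring
    · rw [if_neg h1]; ring
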